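/- If a : Fin N → ℝ is a cyclic orthonormal generator in ℝ^N, then there exist real numbers θ_0, θ_1, …, θ_{N−1} such that for every k ∈ Fin N, a_k = (√2/N) · ∑_{n ∈ Fin N} cos((2πn/N)·k + θ_n). -/

import Mathlib

open Real

lemma cog_two_pi_I_ne_zero : (2 * (π : ℂ) * Complex.I) ≠ 0 := by
  simp [Real.pi_ne_zero, Complex.I_ne_zero, Complex.ofReal_ne_zero]

-- geometric sum of roots of unity
lemma cog_sum_exp (N : ℕ) (hN : 0 < N) (m : ℤ) :
    ∑ n : Fin N, Complex.exp (2 * π * Complex.I * n * m / N) =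
      if (N : ℤ) ∣ m then (N : ℂ) else 0 := by
  have hNC : (N : ℂ) ≠ 0 := Nat.cast_ne_zero.mpr hN.ne'
  set r : ℂ := Complex.exp (2 * π * Complex.I * m / N) with hr
  have hterm : ∀ n : Fin N, Complex.exp (2 * π * Complex.I * n * m / N) = r ^ (n : ℕ) := by
    intro n
    rw [hr, ← Complex.exp_nat_mul]
    congr 1
    ring
  rw [Finset.sum_congr rfl (fun n _ => hterm n), Fin.sum_univ_eq_sum_range]
  have hrN : r ^ N = 1 := by
    rw [hr, ← Complex.exp_nat_mul]
    have h : (N : ℂ) * (2 * π * Complex.I * m / N) = m * (2 * π * Complex.I) := by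
      field_simp
    rw [h, Complex.exp_int_mul_two_pi_mul_I]
  by_cases hdvd : (N : ℤ) ∣ m
  · obtain ⟨c, hc⟩ := hdvd
    have hr1 : r = 1 := by
      rw [hr]
      have h : (2 * π * Complex.I * m / N : ℂ) = c * (2 * π * Complex.I) := by
        have hm : (m : ℂ) = N * c := by exact_mod_cast congrArg (Int.cast : ℤ → ℂ) hc
        rw [hm]; field_simp
      rw [h, Complex.exp_int_mul_two_pi_mul_I]
    rw [if_pos ⟨c, hc⟩]
    simp [hr1]
  · have hr1 : r ≠ 1 := by
      intro h
      rw [hr, Complex.exp_eq_one_iff] at h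
      obtain ⟨k, hk⟩ := h
      apply hdvd
      have h4 : (m : ℂ) = k * N := by
        have h2πI := cog_two_pi_I_ne_zero
        field_simp at hk
        have h6 : (2 * (π:ℂ) * Complex.I) * (m : ℂ) = (2 * (π:ℂ) * Complex.I) * ((k : ℂ) * N) := by
          linear_combination (2 * (π:ℂ) * Complex.I) * hk
        exact mul_left_cancel₀ h2πI h6
      have h5 : m = k * N := by exact_mod_cast h4
      exact ⟨k, by rw [h5]; ring⟩
    rw [geom_sum_eq hr1, hrN]
    simp [hdvd]

lemma cog_exp_congr (N : ℕ) (hN : 0 < N) (n : ℤ) {m m' : ℤ} (h : (N : ℤ) ∣ (m - m')) :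
    Complex.exp (2 * π * Complex.I * n * m / N) = Complex.exp (2 * π * Complex.I * n * m' / N) := by
  have hNC : (N : ℂ) ≠ 0 := Nat.cast_ne_zero.mpr hN.ne'
  obtain ⟨c, hc⟩ := h
  have hm : (m : ℂ) = m' + N * c := by
    have : m = m' + N * c := by omega
    exact_mod_cast congrArg (Int.cast : ℤ → ℂ) this
  rw [show (2 * π * Complex.I * n * m / N : ℂ)
      = 2 * π * Complex.I * n * m' / N + ((n * c : ℤ) : ℂ) * (2 * π * Complex.I) from by
    rw [hm]; push_cast; field_simp]
  rw [Complex.exp_add, Complex.exp_int_mul_two_pi_mul_I, mul_one]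

set_option maxHeartbeats 1000000 in
theorem cog_canonical_form_exists (N : ℕ) (hN : 2 ≤ N) [NeZero N] (a : Fin N → ℝ)
    (ha : ∀ s : Fin N, (∑ j : Fin N, a j * a (j + s)) = if s = 0 then 1 else 0) :
    ∃ θ : Fin N → ℝ, ∀ k : Fin N,
      a k = (Real.sqrt 2 / N) *
        ∑ n : Fin N, Real.cos ((2 * π * (n : ℕ) / N) * (k : ℕ) + θ n) := by
  have hN0 : 0 < N := by omega
  have hNC : (N : ℂ) ≠ 0 := Nat.cast_ne_zero.mpr hN0.ne'
  have hNR : (N : ℝ) ≠ 0 := Nat.cast_ne_zero.mpr hN0.ne'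
  set A : Fin N → ℂ := fun n => ∑ j : Fin N, (a j : ℂ) * Complex.exp (-(2 * π * Complex.I * n * j) / N) with hA
  -- Fourier inversion
  have hinv : ∀ k : Fin N,
      ∑ n : Fin N, A n * Complex.exp (2 * π * Complex.I * n * k / N) = (N : ℂ) * a k := by
    intro k
    have h1 : ∀ n : Fin N, A n * Complex.exp (2 * π * Complex.I * n * k / N)
        = ∑ j : Fin N, (a j : ℂ) * Complex.exp (2 * π * Complex.I * ((n : ℕ) : ℂ) * ((((k : ℤ) - (j : ℤ)) : ℤ) : ℂ) / N) := by
      intro n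
      rw [hA]
      simp only []
      rw [Finset.sum_mul]
      refine Finset.sum_congr rfl fun j _ => ?_
      rw [mul_assoc, ← Complex.exp_add]
      congr 2
      push_cast
      ring
    rw [Finset.sum_congr rfl fun n _ => h1 n, Finset.sum_comm]
    have h2 : ∀ j : Fin N,
        ∑ n : Fin N, (a j : ℂ) * Complex.exp (2 * π * Complex.I * ((n : ℕ) : ℂ) * ((((k : ℤ) - (j : ℤ)) : ℤ) : ℂ) / N)
        = (a j : ℂ) * (if j = k then (N : ℂ) else 0) := by
      intro j
      rw [← Finset.mul_sum, cog_sum_exp N hN0]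
      congr 1
      by_cases hjk : j = k
      · rw [if_pos hjk, if_pos (by simp [hjk])]
      · rw [if_neg, if_neg hjk]
        intro hdvd
        apply hjk
        have hk := k.isLt
        have hj := j.isLt
        have h0 : ((k : ℤ) - (j : ℤ)) = 0 := by
          refine Int.eq_zero_of_abs_lt_dvd hdvd ?_
          rw [abs_lt]
          omega
        exact Fin.ext (by omega)
    rw [Finset.sum_congr rfl fun j _ => h2 j]
    simp [Finset.sum_ite_eq', mul_ite, mul_comm]
  -- modulus one
  have habs : ∀ n : Fin N, ‖A n‖ = 1 := by
    intro n
    have hconj : (starRingEnd ℂ) (A n)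
        = ∑ l : Fin N, (a l : ℂ) * Complex.exp (2 * π * Complex.I * n * l / N) := by
      rw [hA]
      rw [map_sum]
      refine Finset.sum_congr rfl fun l _ => ?_
      rw [map_mul, Complex.conj_ofReal, ← Complex.exp_conj]
      congr 1
      simp only [map_div₀, map_neg, map_mul, map_ofNat, Complex.conj_I,
        Complex.conj_ofReal, Complex.conj_natCast]
      ring
    have key : A n * (starRingEnd ℂ) (A n) = 1 := by
      rw [hconj, hA]
      simp only []
      rw [Finset.sum_mul_sum]
      have h3 : ∀ j : Fin N, ∀ l : Fin N,
          ((a j : ℂ) * Complex.exp (-(2 * π * Complex.I * n * j) / N)) *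
            ((a l : ℂ) * Complex.exp (2 * π * Complex.I * n * l / N))
          = (a j : ℂ) * (a l : ℂ) * Complex.exp (2 * π * Complex.I * n * ((((l : ℤ) - (j : ℤ)) : ℤ) : ℂ) / N) := by
        intro j l
        rw [mul_mul_mul_comm, ← Complex.exp_add]
        congr 2
        push_cast
        ring
      rw [Finset.sum_congr rfl fun j _ => Finset.sum_congr rfl fun l _ => h3 j l]
      have h4 : ∀ j : Fin N,
          ∑ l : Fin N, (a j : ℂ) * (a l : ℂ) * Complex.exp (2 * π * Complex.I * n * ((((l : ℤ) - (j : ℤ)) : ℤ) : ℂ) / N)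
          = ∑ s : Fin N, (a j : ℂ) * (a (j + s) : ℂ) * Complex.exp (2 * π * Complex.I * n * (((s : ℤ) : ℤ) : ℂ) / N) := by
        intro j
        rw [← Equiv.sum_comp (Equiv.addLeft j)
          (fun l => (a j : ℂ) * (a l : ℂ) * Complex.exp (2 * π * Complex.I * n * ((((l : ℤ) - (j : ℤ)) : ℤ) : ℂ) / N))]
        refine Finset.sum_congr rfl fun s _ => ?_
        have hval : ((Equiv.addLeft j) s : Fin N) = j + s := by
          simp [Equiv.addLeft, add_comm]
        rw [hval]
        congr 1
        apply cog_exp_congr N hN0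
        have hadd : ((j + s : Fin N) : ℕ) = ((j : ℕ) + (s : ℕ)) % N := by
          simp [Fin.add_def]
        refine ⟨-((((j : ℕ) + (s : ℕ)) : ℤ) / N), ?_⟩
        rw [hadd]
        push_cast [Int.natCast_mod]
        rw [Int.emod_def]
        ring
      rw [Finset.sum_congr rfl fun j _ => h4 j, Finset.sum_comm]
      have h5 : ∀ s : Fin N,
          ∑ j : Fin N, (a j : ℂ) * (a (j + s) : ℂ) * Complex.exp (2 * π * Complex.I * n * (((s : ℤ) : ℤ) : ℂ) / N)
          = ((if s = 0 then (1:ℝ) else 0 : ℝ) : ℂ) * Complex.exp (2 * π * Complex.I * n * (((s : ℤ) : ℤ) : ℂ) / N) := by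
        intro s
        rw [← Finset.sum_mul, ← ha s]
        push_cast
        ring
      rw [Finset.sum_congr rfl fun s _ => h5 s]
      rw [Fintype.sum_eq_single (0 : Fin N) (by
        intro s hs
        simp [hs])]
      simp
    have hns : Complex.normSq (A n) = 1 := by
      have := Complex.mul_conj (A n)
      rw [key] at this
      exact_mod_cast this.symm
    rw [Complex.norm_def, hns, Real.sqrt_one]
  -- conclusion
  refine ⟨fun n => Complex.arg (A n) + π / 4, fun k => ?_⟩
  have hAn : ∀ n : Fin N, Complex.exp ((Complex.arg (A n) : ℂ) * Complex.I) = A n := by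
    intro n
    have h := Complex.norm_mul_exp_arg_mul_I (A n)
    rwa [habs n, Complex.ofReal_one, one_mul] at h
  have hterm : ∀ n : Fin N,
      Real.cos ((2 * π * (n : ℕ) / N) * (k : ℕ) + (Complex.arg (A n) + π / 4))
      = (Complex.exp (((π / 4 : ℝ) : ℂ) * Complex.I) * (A n * Complex.exp (2 * π * Complex.I * n * k / N))).re := by
    intro n
    rw [← Complex.exp_ofReal_mul_I_re]
    congr 1
    rw [show ((((2 * π * (n : ℕ) / N) * (k : ℕ) + (Complex.arg (A n) + π / 4)) : ℝ) : ℂ) * Complex.I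
        = ((π / 4 : ℝ) : ℂ) * Complex.I + ((Complex.arg (A n) : ℂ) * Complex.I + 2 * π * Complex.I * n * k / N) from by
      push_cast; ring]
    rw [Complex.exp_add, Complex.exp_add, hAn n]
  rw [Finset.sum_congr rfl fun n _ => hterm n, ← Complex.re_sum, ← Finset.mul_sum, hinv k]
  have hre : (Complex.exp (((π / 4 : ℝ) : ℂ) * Complex.I) * ((N : ℂ) * (a k : ℂ))).re
      = ((N : ℝ) * a k) * Real.cos (π / 4) := by
    rw [show (Complex.exp (((π / 4 : ℝ) : ℂ) * Complex.I) * ((N : ℂ) * (a k : ℂ)))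
        = (((N : ℝ) * a k : ℝ) : ℂ) * Complex.exp (((π / 4 : ℝ) : ℂ) * Complex.I) from by
      push_cast; ring]
    rw [Complex.re_ofReal_mul, Complex.exp_ofReal_mul_I_re]
  rw [hre, Real.cos_pi_div_four]
  have h2 : Real.sqrt 2 * Real.sqrt 2 = 2 := Real.mul_self_sqrt (by norm_num)
  rw [show (Real.sqrt 2 / N) * ((N : ℝ) * a k * (Real.sqrt 2 / 2))
      = (Real.sqrt 2 * Real.sqrt 2) / 2 * a k * ((N : ℝ) / N) from by ring,
    h2, div_self hNR]
  norm_num
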